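/- The number of partitions (weakly decreasing sequences of nonnegative integers) contained in the partition ν = (ν_1 ≥ ν_2 ≥ ⋯ ≥ ν_r ≥ 0) equals the binomial determinant det(binom(ν_j + r - i + 1, 1 + j - i))_{1 ≤ i,j ≤ r}. -/

import Mathlib

def Mmat (r : ℕ) (ν : Fin r → ℕ) : Matrix (Fin r) (Fin r) ℤ :=
  Matrix.of fun i j : Fin r =>
    if (i : ℕ) ≤ (j : ℕ) + 1 then
      ((Nat.choose (ν j + r - (i : ℕ)) ((j : ℕ) + 1 - (i : ℕ)) : ℤ))
    else 0

theorem base_det (r : ℕ) : (Mmat r fun _ => 0).det = 1 := by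
  classical
  set A : Matrix (Fin r) (Fin r) ℤ :=
    Matrix.of fun p q : Fin r => ((Nat.choose ((p : ℕ) + 1) (q : ℕ) : ℤ)) with hA
  have hsub : Mmat r (fun _ => 0) = A.submatrix ⇑(Fin.revPerm (n := r)) ⇑Fin.revPerm := by
    ext i j
    have hi : (i : ℕ) < r := i.isLt
    have hj : (j : ℕ) < r := j.isLt
    simp only [Mmat, hA, Matrix.submatrix_apply, Matrix.of_apply, Fin.revPerm_apply,
      Fin.val_rev]
    have hrev : r - 1 - (i : ℕ) + 1 = r - (i : ℕ) := by omega
    rw [show (r - ((i : ℕ) + 1)) = r - 1 - (i : ℕ) by omega, hrev,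
      show (r - ((j : ℕ) + 1)) = r - 1 - (j : ℕ) by omega]
    by_cases h : (i : ℕ) ≤ (j : ℕ) + 1
    · rw [if_pos h]
      have h1 : (j : ℕ) + 1 - (i : ℕ) ≤ r - (i : ℕ) := by omega
      have h2 : r - 1 - (j : ℕ) = (r - (i : ℕ)) - ((j : ℕ) + 1 - (i : ℕ)) := by omega
      rw [h2, Nat.choose_symm h1]
      simp
    · rw [if_neg h]
      have : r - (i : ℕ) < r - 1 - (j : ℕ) := by omega
      rw [Nat.choose_eq_zero_of_lt this]
      simp
  rw [hsub, Matrix.det_submatrix_equiv_self]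
  -- now compute det A via LU
  set B : Matrix (Fin r) (Fin r) ℤ :=
    Matrix.of fun p k : Fin r => ((Nat.choose (p : ℕ) (k : ℕ) : ℤ)) with hB
  set S : Matrix (Fin r) (Fin r) ℤ :=
    Matrix.of fun k q : Fin r =>
      (if (q : ℕ) = (k : ℕ) then 1 else 0) + (if (q : ℕ) = (k : ℕ) + 1 then 1 else 0) with hS
  have hAS : A = B * S := by
    ext p q
    rw [Matrix.mul_apply]
    have expand : ∀ k : Fin r, B p k * S k q
        = (if k = q then (Nat.choose (p : ℕ) (k : ℕ) : ℤ) else 0)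
          + (if (q : ℕ) = (k : ℕ) + 1 then (Nat.choose (p : ℕ) (k : ℕ) : ℤ) else 0) := by
      intro k
      simp only [hB, hS, Matrix.of_apply, mul_add]
      congr 1
      · by_cases h : k = q
        · subst h; simp
        · rw [if_neg h, if_neg (fun hv => h (Fin.ext hv.symm)), mul_zero]
      · by_cases h : (q : ℕ) = (k : ℕ) + 1 <;> simp [h]
    rw [Finset.sum_congr rfl fun k _ => expand k, Finset.sum_add_distrib,
      Finset.sum_ite_eq' Finset.univ q _, if_pos (Finset.mem_univ q)]
    by_cases hq : (q : ℕ) = 0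
    · have hzero : ∀ k : Fin r, (if (q : ℕ) = (k : ℕ) + 1 then (Nat.choose (p : ℕ) (k : ℕ) : ℤ) else 0) = 0 := by
        intro k; rw [if_neg (by omega)]
      rw [Finset.sum_congr rfl fun k _ => hzero k, Finset.sum_const_zero]
      simp only [hA, Matrix.of_apply, hq, Nat.choose_zero_right, Nat.cast_one, add_zero]
    · have hqr : (q : ℕ) - 1 < r := by omega
      set q' : Fin r := ⟨(q : ℕ) - 1, hqr⟩ with hq'
      have hsum : ∀ k : Fin r, (if (q : ℕ) = (k : ℕ) + 1 then (Nat.choose (p : ℕ) (k : ℕ) : ℤ) else 0)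
          = (if k = q' then (Nat.choose (p : ℕ) ((k : ℕ)) : ℤ) else 0) := by
        intro k
        by_cases h : k = q'
        · subst h; rw [if_pos rfl, if_pos (by simp [hq']; omega)]
        · rw [if_neg h, if_neg (fun hv => h (Fin.ext (by simp [hq']; omega)))]
      rw [Finset.sum_congr rfl fun k _ => hsum k, Finset.sum_ite_eq' Finset.univ q' _,
        if_pos (Finset.mem_univ q')]
      simp only [hA, Matrix.of_apply, hq']
      have : (q : ℕ) = ((q : ℕ) - 1) + 1 := by omega
      rw [this, Nat.choose_succ_succ]
      push_cast
      ring
  have htriB : B.BlockTriangular OrderDual.toDual := by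
    intro i j h
    have hij : (i : ℕ) < (j : ℕ) := h
    simp only [hB, Matrix.of_apply]
    rw [Nat.choose_eq_zero_of_lt hij]
    simp
  have hdetB : B.det = 1 := by
    rw [Matrix.det_of_lowerTriangular B htriB]
    simp [hB]
  have htriS : S.BlockTriangular id := by
    intro i j h
    have hij : (j : ℕ) < (i : ℕ) := h
    simp only [hS, Matrix.of_apply]
    rw [if_neg (by omega), if_neg (by omega)]
    simp
  have hdetS : S.det = 1 := by
    rw [Matrix.det_of_upperTriangular htriS]
    have : ∀ i : Fin r, S i i = 1 := by
      intro i
      have h2 : ¬((i : ℕ) = (i : ℕ) + 1) := by omega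
      simp [hS, h2]
    simp [this]
  rw [hAS, Matrix.det_mul, hdetB, hdetS, mul_one]

theorem det_rec_col0 (s : ℕ) (ν : Fin (s+1) → ℕ) (h0 : 1 ≤ ν 0) :
    (Mmat (s+1) ν).det
      = (Mmat (s+1) (Function.update ν 0 (ν 0 - 1))).det
        + (Mmat s (fun j => ν j.succ)).det := by
  classical
  set ν' : Fin (s+1) → ℕ := Function.update ν 0 (ν 0 - 1) with hν'
  set M' : Matrix (Fin (s+1)) (Fin (s+1)) ℤ := Mmat (s+1) ν' with hM'
  have key : Mmat (s+1) ν
      = M'.updateCol 0 ((fun i => M' i 0) + (fun i => if i = 0 then (1:ℤ) else 0)) := by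
    ext i q
    by_cases hq : q = 0
    · subst hq
      rw [Matrix.updateCol_self]
      simp only [Pi.add_apply]
      have hv0 : ν' 0 = ν 0 - 1 := Function.update_self 0 (ν 0 - 1) ν
      simp only [Mmat, hM', Matrix.of_apply, hv0, Fin.val_zero, zero_add]
      rcases Nat.lt_or_ge (i : ℕ) 2 with hi | hi
      · interval_cases h : (i : ℕ)
        · rw [if_pos (by omega), if_pos (by omega)]
          have e1 : ν 0 + (s+1) - 0 = (ν 0 - 1 + (s+1) - 0) + 1 := by omega
          have hi0 : i = 0 := Fin.ext h
          rw [e1]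
          simp only [Nat.sub_zero, Nat.choose_one_right, if_pos hi0]
          push_cast
          ring
        · have hi0 : ¬ (i = 0) := fun hc => by simp [hc] at h
          rw [if_pos (by omega), if_pos (by omega), if_neg hi0]
          simp
      · have hi0 : ¬ (i = 0) := fun hc => by simp [hc] at hi
        rw [if_neg (by omega), if_neg (by omega), if_neg hi0]
        simp
    · rw [Matrix.updateCol_ne hq]
      have hvq : ν' q = ν q := Function.update_of_ne hq _ _
      simp only [Mmat, hM', Matrix.of_apply, hvq]
  rw [key, Matrix.det_updateCol_add, Matrix.updateCol_eq_self]
  congr 1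
  set E := M'.updateCol 0 (fun i => if i = 0 then (1:ℤ) else 0) with hE
  rw [Matrix.det_succ_column_zero]
  rw [Finset.sum_eq_single (0 : Fin (s+1))]
  · have h00 : E 0 0 = 1 := by rw [hE, Matrix.updateCol_self]; simp
    rw [h00]
    simp only [Fin.val_zero, pow_zero, one_mul, mul_one]
    have hsub : E.submatrix (Fin.succAbove 0) Fin.succ = Mmat s (fun j => ν j.succ) := by
      rw [Fin.succAbove_zero]
      ext i j
      have hne : (j.succ : Fin (s+1)) ≠ 0 := Fin.succ_ne_zero j
      rw [Matrix.submatrix_apply, hE, Matrix.updateCol_ne hne]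
      simp only [Mmat, hM', Matrix.of_apply, Fin.val_succ]
      have hvq : ν' j.succ = ν j.succ := Function.update_of_ne hne _ _
      rw [hvq]
      have e1 : ν j.succ + (s+1) - ((i:ℕ)+1) = ν j.succ + s - (i:ℕ) := by
        have := i.isLt; omega
      have e2 : ((j:ℕ)+1) + 1 - ((i:ℕ)+1) = (j:ℕ) + 1 - (i:ℕ) := by omega
      rw [e1, e2]
      by_cases h : (i : ℕ) ≤ (j : ℕ) + 1
      · rw [if_pos (by omega), if_pos h]
      · rw [if_neg (by omega), if_neg h]
    rw [hsub]
  · intro i _ hi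
    have : E i 0 = 0 := by rw [hE, Matrix.updateCol_self]; simp [hi]
    rw [this]; ring
  · intro h
    exact absurd (Finset.mem_univ _) h

theorem det_tie (r : ℕ) (ν : Fin r → ℕ) (j : Fin r) (hj : (j:ℕ)+1 < r)
    (hval : ν ⟨(j:ℕ)+1, hj⟩ = ν j + 1) :
    (Mmat r ν).det = (Mmat r (Function.update ν ⟨(j:ℕ)+1, hj⟩ (ν j))).det := by
  classical
  set j' : Fin r := ⟨(j:ℕ)+1, hj⟩ with hj'
  set ν' : Fin r → ℕ := Function.update ν j' (ν j) with hν'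
  set M' : Matrix (Fin r) (Fin r) ℤ := Mmat r ν' with hM'
  have hjj' : j ≠ j' := by
    intro h
    have := congrArg Fin.val h
    simp [hj'] at this
  have hv1 : ν' j' = ν j := Function.update_self _ _ _
  have hv2 : ν' j = ν j := Function.update_of_ne hjj' _ _
  have key : Mmat r ν
      = M'.updateCol j' ((fun i => M' i j') + (fun i => M' i j)) := by
    ext i q
    by_cases hq : q = j'
    · subst hq
      rw [Matrix.updateCol_self]
      simp only [Pi.add_apply, Mmat, hM', Matrix.of_apply, hv1, hv2, hval, hj']
      rcases Nat.lt_or_ge ((j:ℕ)+1) (i:ℕ) with hi | hi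
      · -- i > j+1 : check whether i ≤ j+2
        by_cases h2 : (i:ℕ) ≤ (j:ℕ)+1+1
        · have hieq : (i:ℕ) = (j:ℕ)+2 := by omega
          rw [if_pos h2, if_pos h2, if_neg (by omega)]
          have e1 : (j:ℕ)+1+1 - (i:ℕ) = 0 := by omega
          rw [e1]
          simp
        · rw [if_neg h2, if_neg h2, if_neg (by omega)]
          simp
      · have h2 : (i:ℕ) ≤ (j:ℕ)+1+1 := by omega
        rw [if_pos h2, if_pos h2, if_pos hi]
        have := i.isLt
        have e1 : ν j + 1 + r - (i:ℕ) = (ν j + r - (i:ℕ)) + 1 := by omega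
        have e2 : (j:ℕ)+1+1 - (i:ℕ) = ((j:ℕ)+1 - (i:ℕ)) + 1 := by omega
        rw [← hj', hv1, hval, e1, e2, Nat.choose_succ_succ]
        push_cast
        ring
    · rw [Matrix.updateCol_ne hq]
      have hvq : ν' q = ν q := Function.update_of_ne hq _ _
      simp only [Mmat, hM', Matrix.of_apply, hvq]
  rw [key, Matrix.det_updateCol_add, Matrix.updateCol_eq_self,
    Matrix.det_updateCol_eq_zero hjj', add_zero]

theorem det_chain (s : ℕ) (ν : Fin (s+1) → ℕ)
    (hdec : ∀ i j : Fin (s+1), i ≤ j → ν j ≤ ν i) (hc1 : 1 ≤ ν 0) :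
    (Mmat (s+1) (Function.update ν 0 (ν 0 - 1))).det
      = (Mmat (s+1) (fun i => min (ν i) (ν 0 - 1))).det := by
  classical
  set c : ℕ := ν 0 with hc
  set g : ℕ → (Fin (s+1) → ℕ) :=
    fun k i => if (i:ℕ) ≤ k then min (ν i) (c-1) else ν i with hg
  have hg0 : Function.update ν 0 (c-1) = g 0 := by
    funext i
    by_cases hi : i = 0
    · subst hi
      rw [Function.update_self]
      simp only [hg, Fin.val_zero, if_pos (le_refl 0)]
      exact (min_eq_right (by omega)).symm
    · rw [Function.update_of_ne hi]
      have : ¬ ((i:ℕ) ≤ 0) := by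
        intro h
        exact hi (Fin.ext (by rw [Fin.val_zero]; omega))
      simp only [hg, if_neg this]
  have hgs : g s = fun i => min (ν i) (c-1) := by
    funext i
    simp only [hg, if_pos (Nat.lt_succ_iff.mp i.isLt)]
  have step : ∀ k, k < s →
      (Mmat (s+1) (g k)).det = (Mmat (s+1) (g (k+1))).det := by
    intro k hk
    have hk1 : k + 1 < s + 1 := by omega
    have hkk : k < s + 1 := by omega
    by_cases hb : ν ⟨k+1, hk1⟩ ≤ c - 1
    · have : g k = g (k+1) := by
        funext i
        simp only [hg]
        by_cases h1 : (i:ℕ) ≤ k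
        · rw [if_pos h1, if_pos (by omega)]
        · by_cases h2 : (i:ℕ) = k+1
          · have : i = ⟨k+1, hk1⟩ := Fin.ext h2
            subst this
            rw [if_neg h1, if_pos (by omega)]
            exact (min_eq_left hb).symm
          · rw [if_neg h1, if_neg (by omega)]
      rw [this]
    · have hle : ν ⟨k+1, hk1⟩ ≤ c := hdec 0 ⟨k+1, hk1⟩ (by simp [Fin.le_def])
      have hvk1 : ν ⟨k+1, hk1⟩ = c := by omega
      have hvk : ν ⟨k, hkk⟩ = c := by
        have h1 : ν ⟨k+1, hk1⟩ ≤ ν ⟨k, hkk⟩ :=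
          hdec _ _ (by simp [Fin.le_def])
        have h2 : ν ⟨k, hkk⟩ ≤ c := hdec 0 _ (by simp [Fin.le_def])
        omega
      have hcondk : ((⟨k, hkk⟩ : Fin (s+1)) : ℕ) ≤ k := le_refl k
      have hcondk1 : ¬ (((⟨k+1, hk1⟩ : Fin (s+1)) : ℕ) ≤ k) := Nat.not_succ_le_self k
      have hgkj : g k ⟨k, hkk⟩ = c - 1 := by
        simp only [hg]
        rw [if_pos hcondk, hvk]
        exact min_eq_right (by omega)
      have hjval : ((⟨k, hkk⟩ : Fin (s+1)) : ℕ) + 1 < s + 1 := hk1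
      have hgkj1 : g k ⟨((⟨k, hkk⟩ : Fin (s+1)) : ℕ) + 1, hjval⟩
          = g k ⟨k, hkk⟩ + 1 := by
        simp only [hg]
        rw [if_pos hcondk, if_neg hcondk1, hvk, hvk1]
        rw [min_eq_right (by omega)]
        omega
      have hdt := det_tie (s+1) (g k) ⟨k, hkk⟩ hjval hgkj1
      have hupd : Function.update (g k) ⟨((⟨k, hkk⟩ : Fin (s+1)) : ℕ) + 1, hjval⟩
          (g k ⟨k, hkk⟩) = g (k+1) := by
        funext i
        by_cases h2 : i = ⟨k+1, hk1⟩
        · subst h2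
          rw [Function.update_self, hgkj]
          simp only [hg]
          rw [if_pos (le_refl (k+1)), hvk1]
          exact (min_eq_right (by omega)).symm
        · rw [Function.update_of_ne h2]
          simp only [hg]
          have hne : (i:ℕ) ≠ k+1 := fun h => h2 (Fin.ext h)
          by_cases h1 : (i:ℕ) ≤ k
          · rw [if_pos h1, if_pos (by omega)]
          · rw [if_neg h1, if_neg (by omega)]
      rw [hdt, hupd]
  have main : ∀ k, k ≤ s → (Mmat (s+1) (g 0)).det = (Mmat (s+1) (g k)).det := by
    intro k
    induction k with
    | zero => intro _; rfl
    | succ k ih =>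
      intro hks
      rw [ih (by omega), step k (by omega)]
  rw [hg0, main s (le_refl s), hgs]

def PartIn (r : ℕ) (ν : Fin r → ℕ) : Type :=
  {μ : Fin r → ℕ // (∀ i, μ i ≤ ν i) ∧ ∀ i j : Fin r, i ≤ j → μ j ≤ μ i}

instance PartIn.finite (r : ℕ) (ν : Fin r → ℕ) : Finite (PartIn r ν) := by
  have h : ∀ μ : PartIn r ν, ∀ i, μ.1 i < ν i + 1 := fun μ i => Nat.lt_succ_of_le (μ.2.1 i)
  refine Finite.of_injective (fun μ : PartIn r ν => fun i => (⟨μ.1 i, h μ i⟩ : Fin (ν i + 1)))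
    fun μ μ' hh => ?_
  apply Subtype.ext
  funext i
  exact congrArg Fin.val (congrFun hh i)

theorem card_base (r : ℕ) : Nat.card (PartIn r (fun _ => 0)) = 1 := by
  have : Unique (PartIn r (fun _ => 0)) := by
    refine ⟨⟨⟨fun _ => 0, fun i => le_refl 0, fun i j _ => le_refl 0⟩⟩, ?_⟩
    rintro ⟨μ, hb, _⟩
    apply Subtype.ext
    funext i
    exact Nat.le_zero.mp (hb i)
  exact Nat.card_unique

theorem card_rec (s : ℕ) (ν : Fin (s+1) → ℕ)
    (hdec : ∀ i j : Fin (s+1), i ≤ j → ν j ≤ ν i) (h0 : 1 ≤ ν 0) :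
    Nat.card (PartIn (s+1) ν)
      = Nat.card (PartIn (s+1) (fun i => min (ν i) (ν 0 - 1)))
        + Nat.card (PartIn s (fun j => ν j.succ)) := by
  classical
  set p : PartIn (s+1) ν → Prop := fun μ => μ.1 0 = ν 0 with hp
  have hsplit : Nat.card (PartIn (s+1) ν)
      = Nat.card {μ : PartIn (s+1) ν // p μ} + Nat.card {μ : PartIn (s+1) ν // ¬ p μ} := by
    rw [← Nat.card_sum]
    exact (Nat.card_congr (Equiv.sumCompl p)).symm
  rw [hsplit]
  have e2 : {μ : PartIn (s+1) ν // p μ} ≃ PartIn s (fun j => ν j.succ) := by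
    refine ⟨fun μ => ⟨fun j => μ.1.1 j.succ,
        fun j => μ.1.2.1 j.succ,
        fun i j hij => μ.1.2.2 i.succ j.succ (Fin.succ_le_succ_iff.mpr hij)⟩,
      fun τ => ⟨⟨Fin.cases (ν 0) τ.1, ?_, ?_⟩, ?_⟩, ?_, ?_⟩
    · intro i
      induction i using Fin.cases with
      | zero => simp
      | succ j => simpa using τ.2.1 j
    · intro i j hij
      induction i using Fin.cases with
      | zero =>
        induction j using Fin.cases with
        | zero => exact le_refl _
        | succ j' =>
          simp only [Fin.cases_zero, Fin.cases_succ]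
          exact le_trans (τ.2.1 j') (hdec 0 j'.succ (Fin.zero_le _))
      | succ i' =>
        induction j using Fin.cases with
        | zero =>
          exact absurd hij (by simp [Fin.le_def])
        | succ j' =>
          simp only [Fin.cases_succ]
          exact τ.2.2 i' j' (Fin.succ_le_succ_iff.mp hij)
    · simp [hp]
    · intro μ
      apply Subtype.ext
      apply Subtype.ext
      funext i
      induction i using Fin.cases with
      | zero => simpa using μ.2.symm
      | succ j => simp
    · intro τ
      apply Subtype.ext
      funext j
      simp
  have e1 : {μ : PartIn (s+1) ν // ¬ p μ} ≃ PartIn (s+1) (fun i => min (ν i) (ν 0 - 1)) := by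
    refine ⟨fun μ => ⟨μ.1.1, fun i => le_min (μ.1.2.1 i) ?_, μ.1.2.2⟩,
      fun μ => ⟨⟨μ.1, fun i => le_trans (μ.2.1 i) (min_le_left _ _), μ.2.2⟩, ?_⟩, ?_, ?_⟩
    · have h1 : μ.1.1 i ≤ μ.1.1 0 := μ.1.2.2 0 i (Fin.zero_le i)
      have h2 : μ.1.1 0 ≤ ν 0 := μ.1.2.1 0
      have h3 : μ.1.1 0 ≠ ν 0 := μ.2
      omega
    · have hb : μ.1 0 ≤ min (ν 0) (ν 0 - 1) := μ.2.1 0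
      rw [min_eq_right (by omega)] at hb
      simp only [hp]
      omega
    · intro μ
      apply Subtype.ext
      apply Subtype.ext
      rfl
    · intro μ
      apply Subtype.ext
      rfl
  rw [Nat.card_congr e1, Nat.card_congr e2]
  exact Nat.add_comm _ _

theorem key (n : ℕ) : ∀ (r : ℕ) (ν : Fin r → ℕ), (∑ i, ν i) ≤ n →
    (∀ i j : Fin r, i ≤ j → ν j ≤ ν i) →
    (Nat.card (PartIn r ν) : ℤ) = (Mmat r ν).det := by
  induction n with
  | zero =>
    intro r ν hsum hdec
    have hz : ν = fun _ => 0 := by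
      funext i
      have : ν i ≤ ∑ j, ν j :=
        Finset.single_le_sum (fun _ _ => Nat.zero_le _) (Finset.mem_univ i)
      omega
    subst hz
    rw [card_base, base_det]
    simp
  | succ n ih =>
    intro r ν hsum hdec
    rcases Nat.eq_zero_or_pos (∑ i, ν i) with hz | hpos
    · have hz' : ν = fun _ => 0 := by
        funext i
        have : ν i ≤ ∑ j, ν j :=
          Finset.single_le_sum (fun _ _ => Nat.zero_le _) (Finset.mem_univ i)
        omega
      subst hz'
      rw [card_base, base_det]
      simp
    · cases r with
      | zero => simp at hpos
      | succ s =>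
        have h0 : 1 ≤ ν 0 := by
          by_contra h
          push_neg at h
          have h0' : ν 0 = 0 := by omega
          have : ∑ i, ν i = 0 := Finset.sum_eq_zero fun i _ => by
            have := hdec 0 i (Fin.zero_le i)
            omega
          omega
        have hsum_tail : (∑ j : Fin s, ν j.succ) ≤ n := by
          have := Fin.sum_univ_succ ν
          omega
        have hdec_tail : ∀ i j : Fin s, i ≤ j → ν j.succ ≤ ν i.succ :=
          fun i j hij => hdec i.succ j.succ (Fin.succ_le_succ_iff.mpr hij)
        have hsum_hat : (∑ i, min (ν i) (ν 0 - 1)) ≤ n := by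
          have hlt : (∑ i, min (ν i) (ν 0 - 1)) < ∑ i, ν i := by
            refine Finset.sum_lt_sum (fun i _ => min_le_left _ _) ⟨0, Finset.mem_univ _, ?_⟩
            have : min (ν 0) (ν 0 - 1) = ν 0 - 1 := min_eq_right (by omega)
            omega
          omega
        have hdec_hat : ∀ i j : Fin (s+1), i ≤ j →
            min (ν j) (ν 0 - 1) ≤ min (ν i) (ν 0 - 1) :=
          fun i j hij => min_le_min (hdec i j hij) (le_refl _)
        rw [card_rec s ν hdec h0, det_rec_col0 s ν h0, det_chain s ν hdec h0]
        push_cast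
        rw [ih (s+1) (fun i => min (ν i) (ν 0 - 1)) hsum_hat hdec_hat,
          ih s (fun j => ν j.succ) hsum_tail hdec_tail]

/-- The number of partitions (weakly decreasing sequences of nonnegative
integers) contained in a partition `ν = (ν_1 ≥ ⋯ ≥ ν_r ≥ 0)` equals the
binomial determinant `det(binom(ν_j + r - i + 1, 1 + j - i))_{1≤i,j≤r}`,
with the convention `binom(m, j) = 0` for `j < 0`. -/
theorem stmt7 (r : ℕ) (ν : Fin r → ℕ)
    (hdec : ∀ i j : Fin r, i ≤ j → ν j ≤ ν i) :
    (Nat.card {μ : Fin r → ℕ //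
        (∀ i, μ i ≤ ν i) ∧ ∀ i j : Fin r, i ≤ j → μ j ≤ μ i} : ℤ) =
      Matrix.det (Matrix.of fun i j : Fin r =>
        if (i : ℕ) ≤ (j : ℕ) + 1 then
          ((Nat.choose (ν j + r - (i : ℕ)) ((j : ℕ) + 1 - (i : ℕ)) : ℤ))
        else 0) := by
  exact key (∑ i, ν i) r ν (le_refl _) hdec
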